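/- Fix a real number d ∈ (0, 1) and define, for each natural number S ≥ 1, g(S) = 1 − (1 − (1 − d)^{S+1}) / (d (S + 1)). Then g is strictly monotonically increasing in S; equivalently, S ↦ (1 − (1 − d)^{S+1}) / (S + 1) is strictly decreasing in S. -/
import Mathlib

lemma key_aux (q : ℝ) (hq0 : 0 ≤ q) (hq1 : q < 1) :
    ∀ n : ℕ, q ^ (n + 1) * (1 + (n + 1 : ℝ) * (1 - q)) < 1 := by
  intro n
  induction n with
  | zero =>
      have h : q ^ (0 + 1) = q := pow_one q
      rw [h]; push_cast; nlinarith [sq_nonneg (1 - q)]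
  | succ n ih =>
      have hpn : 0 ≤ q ^ (n + 1) := pow_nonneg hq0 _
      have hpow : q ^ (n + 1) * q ≤ 1 := by
        have := pow_le_one₀ hq0 hq1.le (n := n + 2)
        rwa [pow_succ] at this
      have hsucc : q ^ (n + 1 + 1) = q ^ (n + 1) * q := by ring
      rw [hsucc]
      rcases hq0.lt_or_eq with hqpos | hq0'
      · have h1 : q * (q ^ (n + 1) * (1 + ((n : ℝ) + 1) * (1 - q))) < q * 1 :=
          mul_lt_mul_of_pos_left ih hqpos
        have h2 : q ^ (n + 1) * q * (1 - q) ≤ 1 * (1 - q) :=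
          mul_le_mul_of_nonneg_right hpow (by linarith)
        push_cast
        nlinarith [h1, h2]
      · rw [← hq0']
        simp

lemma step_aux (d : ℝ) (hd : d ∈ Set.Ioo (0 : ℝ) 1) (n : ℕ) :
    (1 - (1 - d) ^ (n + 1 + 1)) / ((n : ℝ) + 1 + 1) <
      (1 - (1 - d) ^ (n + 1)) / ((n : ℝ) + 1) := by
  obtain ⟨hd0, hd1⟩ := hd
  set q := 1 - d with hq
  have hq0 : 0 ≤ q := by simp [hq]; linarith
  have hq1 : q < 1 := by simp [hq]; linarith
  have key := key_aux q hq0 hq1 n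
  have h1 : (0 : ℝ) < (n : ℝ) + 1 := by positivity
  have h2 : (0 : ℝ) < (n : ℝ) + 1 + 1 := by positivity
  rw [div_lt_div_iff₀ h2 h1]
  have hsucc : q ^ (n + 1 + 1) = q ^ (n + 1) * q := by ring
  nlinarith [pow_nonneg hq0 (n + 1)]

theorem relative_improvement_strictMonoOn_S (d : ℝ) (hd : d ∈ Set.Ioo (0 : ℝ) 1) :
    StrictMonoOn (fun S : ℕ => 1 - (1 - (1 - d) ^ (S + 1)) / (d * (S + 1)))
        (Set.Ici 1) ∧
      StrictAntiOn (fun S : ℕ => (1 - (1 - d) ^ (S + 1)) / (S + 1)) (Set.Ici 1) := by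
  have hanti : StrictAntiOn (fun S : ℕ => (1 - (1 - d) ^ (S + 1)) / (S + 1))
      (Set.Ici 1) := by
    have hA : StrictAnti (fun n : ℕ => (1 - (1 - d) ^ (n + 1 + 1)) / ((n : ℝ) + 1 + 1)) := by
      apply strictAnti_nat_of_succ_lt
      intro n
      have := step_aux d hd (n + 1)
      push_cast at this ⊢
      convert this using 2 <;> push_cast <;> ring
    intro a ha b hb hab
    obtain ⟨a', rfl⟩ := Nat.exists_eq_add_of_le (ha : 1 ≤ a)
    obtain ⟨b', rfl⟩ := Nat.exists_eq_add_of_le (hb : 1 ≤ b)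
    have hab' : a' < b' := by omega
    have := hA hab'
    simp only []
    convert this using 2 <;> push_cast <;> ring
  refine ⟨?_, hanti⟩
  intro a ha b hb hab
  have h := hanti ha hb hab
  simp only [] at h ⊢
  have hd0 : 0 < d := hd.1
  have hrw : ∀ n : ℕ, (1 - (1 - d) ^ (n + 1)) / (d * ((n : ℝ) + 1)) =
      ((1 - (1 - d) ^ (n + 1)) / ((n : ℝ) + 1)) / d := by
    intro n; rw [div_div, mul_comm]
  rw [hrw a, hrw b]
  have := div_lt_div_of_pos_right h hd0
  linarith
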